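/- For parameters α ∈ [0,1], β ∈ (0,1], ν > α−1 with α + β > 0, the generalized factorial has the asymptotic growth lim_{n→∞} ln([n]_{α,β,ν}!) / (n ln n) = α + β. -/

import Mathlib

open Real Filter Finset

-- ratio lemma
lemma logGamma_ratio_lower (α x : ℝ) (h0 : 0 ≤ α) (h1 : α ≤ 1) (hx : 0 < x) :
    α * Real.log x ≤ Real.log (Real.Gamma (x+1)) - Real.log (Real.Gamma (x+1-α)) := by
  have hx1 : (0:ℝ) < x + 1 := by linarith
  have hconv := Real.convexOn_log_Gamma.2 (Set.mem_Ioi.mpr hx) (Set.mem_Ioi.mpr hx1)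
      h0 (by linarith : (0:ℝ) ≤ 1 - α) (by ring)
  have hcomb : α • x + (1-α) • (x+1) = x + 1 - α := by simp [smul_eq_mul]; ring
  rw [hcomb] at hconv
  simp only [Function.comp_apply, smul_eq_mul] at hconv
  have hGx : Real.Gamma (x+1) = x * Real.Gamma x := Real.Gamma_add_one (ne_of_gt hx)
  have hlg : Real.log (Real.Gamma (x+1)) = Real.log x + Real.log (Real.Gamma x) := by
    rw [hGx, Real.log_mul (ne_of_gt hx) (ne_of_gt (Real.Gamma_pos_of_pos hx))]
  nlinarith [hconv]

lemma logGamma_ratio_upper (α x : ℝ) (h0 : 0 ≤ α) (h1 : α ≤ 1) (hx : 0 < x) :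
    Real.log (Real.Gamma (x+1)) - Real.log (Real.Gamma (x+1-α)) ≤ α * Real.log (x+1) := by
  have hy : (0:ℝ) < x + 1 - α := by linarith
  have hy2 : (0:ℝ) < x + 2 - α := by linarith
  have hconv := Real.convexOn_log_Gamma.2 (Set.mem_Ioi.mpr hy) (Set.mem_Ioi.mpr hy2)
      (by linarith : (0:ℝ) ≤ 1 - α) h0 (by ring)
  have hcomb : (1-α) • (x+1-α) + α • (x+2-α) = x + 1 := by simp [smul_eq_mul]; ring
  rw [hcomb] at hconv
  simp only [Function.comp_apply, smul_eq_mul] at hconv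
  have hG : Real.Gamma (x+2-α) = (x+1-α) * Real.Gamma (x+1-α) := by
    have := Real.Gamma_add_one (ne_of_gt hy)
    rw [show x+1-α+1 = x+2-α by ring] at this
    exact this
  have hlg : Real.log (Real.Gamma (x+2-α)) = Real.log (x+1-α) + Real.log (Real.Gamma (x+1-α)) := by
    rw [hG, Real.log_mul (ne_of_gt hy) (ne_of_gt (Real.Gamma_pos_of_pos hy))]
  have hle : Real.log (x+1-α) ≤ Real.log (x+1) := by
    apply Real.log_le_log hy; linarith
  nlinarith [hconv, mul_le_mul_of_nonneg_left hle h0]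

lemma nlogn_atTop : Filter.Tendsto (fun n : ℕ => (n : ℝ) * Real.log n) Filter.atTop Filter.atTop :=
  tendsto_natCast_atTop_atTop.atTop_mul_atTop₀ (Real.tendsto_log_atTop.comp tendsto_natCast_atTop_atTop)

lemma log_factorial_asymp :
    Filter.Tendsto (fun n : ℕ => Real.log (Nat.factorial n) / ((n : ℝ) * Real.log n))
      Filter.atTop (nhds 1) := by
  have hsqrtpi : (0:ℝ) < Real.sqrt Real.pi := Real.sqrt_pos.mpr Real.pi_pos
  have hlogs : Filter.Tendsto (fun n : ℕ => Real.log (Stirling.stirlingSeq n)) Filter.atTop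
      (nhds (Real.log (Real.sqrt Real.pi))) :=
    ((Real.continuousAt_log (ne_of_gt hsqrtpi)).tendsto).comp Stirling.tendsto_stirlingSeq_sqrt_pi
  have h1 : Filter.Tendsto (fun n : ℕ => Real.log (Stirling.stirlingSeq n) / ((n:ℝ) * Real.log n))
      Filter.atTop (nhds 0) := hlogs.div_atTop nlogn_atTop
  have h2 : Filter.Tendsto (fun n : ℕ => Real.log (Real.sqrt (2*n)) / ((n:ℝ) * Real.log n))
      Filter.atTop (nhds 0) := by
    apply tendsto_of_tendsto_of_tendsto_of_le_of_le' tendsto_const_nhds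
      tendsto_one_div_atTop_nhds_zero_nat
    · filter_upwards [eventually_ge_atTop 2] with n hn
      have hn1 : (2:ℝ) ≤ (n:ℝ) := by exact_mod_cast hn
      have h1 : (1:ℝ) ≤ Real.sqrt (2*n) := by
        rw [show (1:ℝ) = Real.sqrt 1 by simp]
        exact Real.sqrt_le_sqrt (by linarith)
      have hlog : (0:ℝ) < Real.log n := Real.log_pos (by linarith)
      exact div_nonneg (Real.log_nonneg h1) (by positivity)
    · filter_upwards [eventually_ge_atTop 2] with n hn
      have hn2 : (2:ℝ) ≤ (n:ℝ) := by exact_mod_cast hn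
      have hlogn : Real.log 2 ≤ Real.log n := Real.log_le_log two_pos hn2
      have hlog2 : (0:ℝ) < Real.log 2 := Real.log_pos one_lt_two
      have hd : (0:ℝ) < (n:ℝ) * Real.log n := by
        apply mul_pos (by linarith) (by linarith)
      have hnum : Real.log (Real.sqrt (2*n)) ≤ Real.log n := by
        rw [Real.log_sqrt (by positivity), Real.log_mul two_ne_zero (by positivity)]
        linarith
      rw [div_le_div_iff₀ hd (by linarith : (0:ℝ) < n), one_mul]
      calc Real.log (Real.sqrt (2*n)) * n ≤ Real.log n * n := by
            exact mul_le_mul_of_nonneg_right hnum (by linarith)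
        _ = (n:ℝ) * Real.log n := by ring
  have h3 : Filter.Tendsto (fun n : ℕ => 1 - 1 / Real.log n) Filter.atTop (nhds 1) := by
    have : Filter.Tendsto (fun n : ℕ => 1 / Real.log n) Filter.atTop (nhds 0) :=
      tendsto_const_nhds.div_atTop (Real.tendsto_log_atTop.comp tendsto_natCast_atTop_atTop)
    simpa using (tendsto_const_nhds.sub this : Filter.Tendsto (fun n : ℕ => 1 - 1/Real.log n) _ (nhds (1 - 0)))
  have key := (h1.add h2).add h3
  rw [zero_add, zero_add] at key
  apply key.congr'
  filter_upwards [eventually_ge_atTop 2] with n hn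
  have hn0 : (0:ℝ) < n := by positivity
  have hn2 : (2:ℝ) ≤ (n:ℝ) := by exact_mod_cast hn
  have hlogn : (0:ℝ) < Real.log n := Real.log_pos (by linarith)
  have hs : Stirling.stirlingSeq n = Nat.factorial n / (Real.sqrt (2*n) * ((n:ℝ)/Real.exp 1)^n) := rfl
  have hspos : (0:ℝ) < Stirling.stirlingSeq n := by
    obtain ⟨m, rfl⟩ : ∃ m, n = m + 1 := ⟨n - 1, by omega⟩
    exact Stirling.stirlingSeq'_pos m
  have hsq : (0:ℝ) < Real.sqrt (2*n) := Real.sqrt_pos.mpr (by linarith)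
  have hpow : (0:ℝ) < ((n:ℝ)/Real.exp 1)^n := pow_pos (by positivity) n
  have hfac : (0:ℝ) < (Nat.factorial n : ℝ) := by exact_mod_cast Nat.factorial_pos n
  have hlogfac : Real.log (Nat.factorial n) =
      Real.log (Stirling.stirlingSeq n) + Real.log (Real.sqrt (2*n)) + (n * Real.log n - n) := by
    have : (Nat.factorial n : ℝ) = Stirling.stirlingSeq n * (Real.sqrt (2*n) * ((n:ℝ)/Real.exp 1)^n) := by
      rw [hs]; field_simp
    rw [this, Real.log_mul (ne_of_gt hspos) (by positivity), Real.log_mul (ne_of_gt hsq) (ne_of_gt hpow),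
      Real.log_pow, Real.log_div (ne_of_gt hn0) (Real.exp_ne_zero 1), Real.log_exp]
    push_cast
    ring
  rw [hlogfac]
  have hd : ((n:ℝ) * Real.log n) ≠ 0 := by positivity
  field_simp

lemma master (m : ℕ → ℕ) (b : ℝ) (hb : 0 < b)
    (hr : Filter.Tendsto (fun n : ℕ => (m n : ℝ) / n) Filter.atTop (nhds b)) :
    Filter.Tendsto (fun n : ℕ => Real.log (Nat.factorial (m n)) / ((n : ℝ) * Real.log n))
      Filter.atTop (nhds b) := by
  have hmR : Filter.Tendsto (fun n : ℕ => ((m n : ℝ))) Filter.atTop Filter.atTop := by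
    apply (hr.pos_mul_atTop hb tendsto_natCast_atTop_atTop).congr'
    filter_upwards [eventually_ge_atTop 1] with n hn
    have : (n:ℝ) ≠ 0 := by positivity
    field_simp
  have hmN : Filter.Tendsto m Filter.atTop Filter.atTop := by
    rwa [tendsto_natCast_atTop_iff] at hmR
  have hm2 : ∀ᶠ n : ℕ in Filter.atTop, 2 ≤ m n := hmN.eventually_ge_atTop 2
  have hF : Filter.Tendsto (fun n : ℕ => Real.log (Nat.factorial (m n)) / ((m n : ℝ) * Real.log (m n)))
      Filter.atTop (nhds 1) := log_factorial_asymp.comp hmN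
  have hlogr : Filter.Tendsto (fun n : ℕ => Real.log ((m n : ℝ)/n)) Filter.atTop (nhds (Real.log b)) :=
    ((Real.continuousAt_log (ne_of_gt hb)).tendsto).comp hr
  have hlogdiv : Filter.Tendsto (fun n : ℕ => Real.log (m n) / Real.log n) Filter.atTop (nhds 1) := by
    have h0 : Filter.Tendsto (fun n : ℕ => Real.log ((m n : ℝ)/n) / Real.log n + 1)
        Filter.atTop (nhds 1) := by
      simpa using (hlogr.div_atTop (Real.tendsto_log_atTop.comp tendsto_natCast_atTop_atTop)).add
        (tendsto_const_nhds : Filter.Tendsto (fun _ : ℕ => (1:ℝ)) _ _)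
    apply h0.congr'
    filter_upwards [eventually_ge_atTop 2, hm2] with n hn hmn
    have hn0 : (0:ℝ) < n := by positivity
    have hmn0 : (0:ℝ) < (m n : ℝ) := by
      have : 0 < m n := by omega
      exact_mod_cast this
    have : Real.log (m n) = Real.log ((m n : ℝ)/n) + Real.log n := by
      rw [← Real.log_mul (by positivity) (ne_of_gt hn0)]
      congr 1
      field_simp
    rw [this]
    have hln : Real.log n ≠ 0 := ne_of_gt (Real.log_pos (by exact_mod_cast hn))
    field_simp
  have key := (hF.mul hr).mul hlogdiv
  rw [one_mul, mul_one] at key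
  apply key.congr'
  filter_upwards [eventually_ge_atTop 2, hm2] with n hn hmn
  have hn0 : (0:ℝ) < n := by exact_mod_cast Nat.lt_of_lt_of_le two_pos hn
  have hmn0 : (0:ℝ) < (m n : ℝ) := by exact_mod_cast Nat.lt_of_lt_of_le two_pos hmn
  have hln : (0:ℝ) < Real.log n := Real.log_pos (by exact_mod_cast hn)
  have hlm : (0:ℝ) < Real.log (m n) := Real.log_pos (by exact_mod_cast hmn)
  field_simp

lemma logGamma_squeeze (y : ℝ) (hy : 2 ≤ y) :
    Real.log (Nat.factorial (⌊y⌋₊ - 1)) ≤ Real.log (Real.Gamma y) ∧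
    Real.log (Real.Gamma y) ≤ Real.log (Nat.factorial (⌊y⌋₊ + 1)) := by
  set m := ⌊y⌋₊ with hm
  have hy0 : (0:ℝ) ≤ y := by linarith
  have hm2 : 2 ≤ m := Nat.le_floor (by exact_mod_cast hy)
  have hmy : (m:ℝ) ≤ y := Nat.floor_le hy0
  have hym : y < (m:ℝ) + 1 := Nat.lt_floor_add_one y
  set a := y - m with ha
  have ha0 : 0 ≤ a := by simp [ha]; linarith
  have ha1 : a ≤ 1 := by simp [ha]; linarith
  have hmR : (2:ℝ) ≤ (m:ℝ) := by exact_mod_cast hm2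
  have hx : (0:ℝ) < y - 1 := by linarith
  have hGm : Real.Gamma (m:ℝ) = Nat.factorial (m - 1) := by
    have : ((m:ℝ)) = ((m-1 : ℕ):ℝ) + 1 := by
      have : 1 ≤ m := by omega
      push_cast [Nat.cast_sub this]
      ring
    rw [this, Real.Gamma_nat_eq_factorial]
  have hlow := logGamma_ratio_lower a (y-1) ha0 ha1 hx
  have hupp := logGamma_ratio_upper a (y-1) ha0 ha1 hx
  rw [show y - 1 + 1 = y by ring] at hlow hupp
  rw [show y - a = (m:ℝ) by rw [ha]; ring] at hlow hupp
  have hlogx : 0 ≤ Real.log (y - 1) := Real.log_nonneg (by linarith)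
  have hlogy : 0 ≤ Real.log y := Real.log_nonneg (by linarith)
  constructor
  · rw [← hGm]
    nlinarith [mul_nonneg ha0 hlogx]
  · have h1 : Real.log (Real.Gamma y) ≤ Real.log ((Nat.factorial (m-1) : ℝ)) + Real.log y := by
      rw [← hGm]
      nlinarith [mul_le_mul_of_nonneg_right ha1 hlogy]
    have h2 : Real.log y ≤ Real.log ((m:ℝ)+1) := Real.log_le_log (by linarith) (by linarith)
    have h3 : Real.log ((Nat.factorial (m-1) : ℝ)) + Real.log ((m:ℝ)+1)
        ≤ Real.log (Nat.factorial (m+1)) := by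
      rw [← Real.log_mul (by positivity) (by positivity)]
      apply Real.log_le_log (by positivity)
      have : Nat.factorial (m-1) * (m+1) ≤ Nat.factorial (m+1) := by
        have h5 : Nat.factorial m = m * Nat.factorial (m-1) := by
          conv_lhs => rw [show m = (m-1) + 1 by omega]
          rw [Nat.factorial_succ]
          congr 2
          omega
        have h4 : Nat.factorial (m+1) = (m+1) * (m * Nat.factorial (m-1)) := by
          rw [Nat.factorial_succ, h5]
        rw [h4]
        nlinarith [Nat.factorial_pos (m-1), hm2]
      calc (Nat.factorial (m-1) : ℝ) * ((m:ℝ)+1) = ((Nat.factorial (m-1) * (m+1) : ℕ) : ℝ) := by push_cast; ring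
        _ ≤ _ := by exact_mod_cast this
    linarith

lemma ratio_squeeze (r : ℕ → ℝ) (b c1 c2 : ℝ)
    (h : ∀ᶠ n : ℕ in Filter.atTop, b*n + c1 ≤ r n ∧ r n ≤ b*n + c2) :
    Filter.Tendsto (fun n : ℕ => r n / n) Filter.atTop (nhds b) := by
  have hinv : Filter.Tendsto (fun n : ℕ => 1/(n:ℝ)) Filter.atTop (nhds 0) :=
    tendsto_one_div_atTop_nhds_zero_nat
  have hlo : Filter.Tendsto (fun n : ℕ => b + c1 * (1/(n:ℝ))) Filter.atTop (nhds b) := by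
    simpa using tendsto_const_nhds.add (hinv.const_mul c1)
  have hhi : Filter.Tendsto (fun n : ℕ => b + c2 * (1/(n:ℝ))) Filter.atTop (nhds b) := by
    simpa using tendsto_const_nhds.add (hinv.const_mul c2)
  apply tendsto_of_tendsto_of_tendsto_of_le_of_le' hlo hhi
  · filter_upwards [h, eventually_ge_atTop 1] with n hn hn1
    have hn0 : (0:ℝ) < n := by exact_mod_cast hn1
    rw [show b + c1 * (1/(n:ℝ)) = (b*n + c1)/n by field_simp]
    exact div_le_div_of_nonneg_right hn.1 hn0.le
  · filter_upwards [h, eventually_ge_atTop 1] with n hn hn1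
    have hn0 : (0:ℝ) < n := by exact_mod_cast hn1
    rw [show b + c2 * (1/(n:ℝ)) = (b*n + c2)/n by field_simp]
    exact div_le_div_of_nonneg_right hn.2 hn0.le

lemma tail_asymp (b c : ℝ) (hb : 0 < b) :
    Filter.Tendsto (fun n : ℕ => Real.log (Real.Gamma (b*n + c)) / ((n:ℝ) * Real.log n))
      Filter.atTop (nhds b) := by
  have hy : Filter.Tendsto (fun n : ℕ => b*(n:ℝ) + c) Filter.atTop Filter.atTop :=
    (tendsto_natCast_atTop_atTop.const_mul_atTop hb).atTop_add tendsto_const_nhds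
  have hy2 : ∀ᶠ n : ℕ in Filter.atTop, 2 ≤ b*(n:ℝ) + c := hy.eventually_ge_atTop 2
  have hfl : ∀ᶠ n : ℕ in Filter.atTop,
      b*n + c - 1 ≤ ((⌊b*(n:ℝ)+c⌋₊ : ℝ)) ∧ ((⌊b*(n:ℝ)+c⌋₊ : ℝ)) ≤ b*n + c ∧ 2 ≤ ⌊b*(n:ℝ)+c⌋₊ := by
    filter_upwards [hy2] with n hn
    have h0 : (0:ℝ) ≤ b*n+c := by linarith
    refine ⟨by linarith [Nat.lt_floor_add_one (b*(n:ℝ)+c)], Nat.floor_le h0, Nat.le_floor (by exact_mod_cast hn)⟩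
  have hr1 : Filter.Tendsto (fun n : ℕ => ((⌊b*(n:ℝ)+c⌋₊ - 1 : ℕ) : ℝ) / n) Filter.atTop (nhds b) := by
    apply ratio_squeeze _ b (c-2) c
    filter_upwards [hfl] with n hn
    have : ((⌊b*(n:ℝ)+c⌋₊ - 1 : ℕ) : ℝ) = ((⌊b*(n:ℝ)+c⌋₊ : ℝ)) - 1 := by
      have := hn.2.2
      push_cast [Nat.cast_sub (by omega : 1 ≤ ⌊b*(n:ℝ)+c⌋₊)]
      ring
    rw [this]
    constructor <;> [linarith [hn.1]; linarith [hn.2.1]]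
  have hr2 : Filter.Tendsto (fun n : ℕ => ((⌊b*(n:ℝ)+c⌋₊ + 1 : ℕ) : ℝ) / n) Filter.atTop (nhds b) := by
    apply ratio_squeeze _ b (c-1) (c+1)
    filter_upwards [hfl] with n hn
    push_cast
    constructor <;> [linarith [hn.1]; linarith [hn.2.1]]
  have hM1 := master _ b hb hr1
  have hM2 := master _ b hb hr2
  apply tendsto_of_tendsto_of_tendsto_of_le_of_le' hM1 hM2
  · filter_upwards [hy2, eventually_ge_atTop 2] with n hn hn2
    have hln : (0:ℝ) ≤ (n:ℝ) * Real.log n := by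
      have : (2:ℝ) ≤ n := by exact_mod_cast hn2
      have := Real.log_nonneg (by linarith : (1:ℝ) ≤ (n:ℝ))
      positivity
    exact div_le_div_of_nonneg_right ((logGamma_squeeze _ hn).1) hln
  · filter_upwards [hy2, eventually_ge_atTop 2] with n hn hn2
    have hln : (0:ℝ) ≤ (n:ℝ) * Real.log n := by
      have : (2:ℝ) ≤ n := by exact_mod_cast hn2
      have := Real.log_nonneg (by linarith : (1:ℝ) ≤ (n:ℝ))
      positivity
    exact div_le_div_of_nonneg_right ((logGamma_squeeze _ hn).2) hln

lemma log_icc_factorial (n : ℕ) :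
    ∑ i ∈ Finset.Icc 1 n, Real.log i = Real.log (Nat.factorial n) := by
  rw [← Real.log_prod (fun i hi => by
    have : 1 ≤ i := (Finset.mem_Icc.mp hi).1
    positivity)]
  congr 1
  rw [← Nat.cast_prod]
  congr 1
  rw [← Finset.Ico_add_one_right_eq_Icc]
  exact Finset.prod_Ico_id_eq_factorial n

lemma sum_asymp (α β : ℝ) (hα0 : 0 ≤ α) (hα1 : α ≤ 1) (hβ0 : 0 < β) (hβ1 : β ≤ 1) :
    Filter.Tendsto (fun n : ℕ =>
      (∑ i ∈ Finset.Icc 1 n, (Real.log (Real.Gamma (β*i+1)) - Real.log (Real.Gamma (β*i+1-α))))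
        / ((n:ℝ) * Real.log n)) Filter.atTop (nhds α) := by
  set S : ℕ → ℝ := fun n =>
    ∑ i ∈ Finset.Icc 1 n, (Real.log (Real.Gamma (β*i+1)) - Real.log (Real.Gamma (β*i+1-α)))
  have hlogfac : Filter.Tendsto (fun n : ℕ => Real.log β / Real.log n
      + Real.log (Nat.factorial n) / ((n:ℝ) * Real.log n)) Filter.atTop (nhds 1) := by
    simpa using (tendsto_const_nhds.div_atTop
      (Real.tendsto_log_atTop.comp tendsto_natCast_atTop_atTop)).add log_factorial_asymp
  have hlow : Filter.Tendsto (fun n : ℕ => α * (Real.log β / Real.log n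
      + Real.log (Nat.factorial n) / ((n:ℝ) * Real.log n))) Filter.atTop (nhds α) := by
    simpa using hlogfac.const_mul α
  have hupfac : Filter.Tendsto (fun n : ℕ => Real.log 2 / Real.log n
      + Real.log (Nat.factorial n) / ((n:ℝ) * Real.log n)) Filter.atTop (nhds 1) := by
    simpa using (tendsto_const_nhds.div_atTop
      (Real.tendsto_log_atTop.comp tendsto_natCast_atTop_atTop)).add log_factorial_asymp
  have hup : Filter.Tendsto (fun n : ℕ => α * (Real.log 2 / Real.log n
      + Real.log (Nat.factorial n) / ((n:ℝ) * Real.log n))) Filter.atTop (nhds α) := by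
    simpa using hupfac.const_mul α
  apply tendsto_of_tendsto_of_tendsto_of_le_of_le' hlow hup
  · filter_upwards [eventually_ge_atTop 2] with n hn
    have hn2 : (2:ℝ) ≤ n := by exact_mod_cast hn
    have hln : (0:ℝ) < Real.log n := Real.log_pos (by linarith)
    have hn0 : (0:ℝ) < n := by linarith
    have hSlow : α * ((n:ℝ) * Real.log β + Real.log (Nat.factorial n)) ≤ S n := by
      have : ∀ i ∈ Finset.Icc 1 n, α * (Real.log β + Real.log i)
          ≤ Real.log (Real.Gamma (β*i+1)) - Real.log (Real.Gamma (β*i+1-α)) := by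
        intro i hi
        have hi1 : 1 ≤ i := (Finset.mem_Icc.mp hi).1
        have hx : (0:ℝ) < β * i := by
          have : (1:ℝ) ≤ i := by exact_mod_cast hi1
          positivity
        have := logGamma_ratio_lower α (β*i) hα0 hα1 hx
        rwa [Real.log_mul (ne_of_gt hβ0) (by positivity : ((i:ℝ)) ≠ 0)] at this
      calc α * ((n:ℝ) * Real.log β + Real.log (Nat.factorial n))
          = ∑ i ∈ Finset.Icc 1 n, α * (Real.log β + Real.log i) := by
            rw [← Finset.mul_sum, Finset.sum_add_distrib, Finset.sum_const, Nat.card_Icc,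
              log_icc_factorial]
            simp [nsmul_eq_mul]
        _ ≤ S n := Finset.sum_le_sum this
    calc α * (Real.log β / Real.log n + Real.log (Nat.factorial n) / ((n:ℝ) * Real.log n))
        = α * ((n:ℝ) * Real.log β + Real.log (Nat.factorial n)) / ((n:ℝ) * Real.log n) := by
          field_simp
      _ ≤ S n / ((n:ℝ) * Real.log n) := div_le_div_of_nonneg_right hSlow (le_of_lt (by positivity))
  · filter_upwards [eventually_ge_atTop 2] with n hn
    have hn2 : (2:ℝ) ≤ n := by exact_mod_cast hn
    have hln : (0:ℝ) < Real.log n := Real.log_pos (by linarith)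
    have hn0 : (0:ℝ) < n := by linarith
    have hSup : S n ≤ α * ((n:ℝ) * Real.log 2 + Real.log (Nat.factorial n)) := by
      have : ∀ i ∈ Finset.Icc 1 n, Real.log (Real.Gamma (β*i+1)) - Real.log (Real.Gamma (β*i+1-α))
          ≤ α * (Real.log 2 + Real.log i) := by
        intro i hi
        have hi1 : 1 ≤ i := (Finset.mem_Icc.mp hi).1
        have hiR : (1:ℝ) ≤ i := by exact_mod_cast hi1
        have hx : (0:ℝ) < β * i := by positivity
        have h := logGamma_ratio_upper α (β*i) hα0 hα1 hx
        have h2 : Real.log (β*i+1) ≤ Real.log (2*i) := by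
          apply Real.log_le_log (by positivity)
          nlinarith
        have h3 : Real.log (2*i) = Real.log 2 + Real.log i := by
          rw [Real.log_mul two_ne_zero (by positivity)]
        calc Real.log (Real.Gamma (β*i+1)) - Real.log (Real.Gamma (β*i+1-α))
            ≤ α * Real.log (β*i+1) := h
          _ ≤ α * (Real.log 2 + Real.log i) := by
              rw [← h3]; exact mul_le_mul_of_nonneg_left h2 hα0
      calc S n ≤ ∑ i ∈ Finset.Icc 1 n, α * (Real.log 2 + Real.log i) := Finset.sum_le_sum this
        _ = α * ((n:ℝ) * Real.log 2 + Real.log (Nat.factorial n)) := by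
            rw [← Finset.mul_sum, Finset.sum_add_distrib, Finset.sum_const, Nat.card_Icc,
              log_icc_factorial]
            simp [nsmul_eq_mul]
    calc S n / ((n:ℝ) * Real.log n)
        ≤ α * ((n:ℝ) * Real.log 2 + Real.log (Nat.factorial n)) / ((n:ℝ) * Real.log n) :=
          div_le_div_of_nonneg_right hSup (le_of_lt (by positivity))
      _ = α * (Real.log 2 / Real.log n + Real.log (Nat.factorial n) / ((n:ℝ) * Real.log n)) := by
          field_simp

/-- The generalized factorial `[n]_{α,β,ν}!`. -/
noncomputable def genFact (α β ν : ℝ) (n : ℕ) : ℝ :=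
  (∏ i ∈ Finset.Icc 1 n, Real.Gamma (β * i + 1) / Real.Gamma (β * i + 1 - α)) *
    (Real.Gamma (β * n + 1 - α + ν) / Real.Gamma (1 - α + ν))

theorem genFact_asymptotic_growth (α β ν : ℝ) (hα0 : 0 ≤ α) (hα1 : α ≤ 1)
    (hβ0 : 0 < β) (hβ1 : β ≤ 1) (hν : ν > α - 1) (hαβ : 0 < α + β) :
    Filter.Tendsto (fun n : ℕ => Real.log (genFact α β ν n) / (n * Real.log n))
      Filter.atTop (nhds (α + β)) := by
  have hc : (0:ℝ) < 1 - α + ν := by linarith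
  have hdecomp : ∀ n : ℕ, Real.log (genFact α β ν n) =
      (∑ i ∈ Finset.Icc 1 n, (Real.log (Real.Gamma (β*i+1)) - Real.log (Real.Gamma (β*i+1-α))))
      + Real.log (Real.Gamma (β*n+1-α+ν)) - Real.log (Real.Gamma (1-α+ν)) := by
    intro n
    have hterm : ∀ i ∈ Finset.Icc 1 n, (0:ℝ) < Real.Gamma (β*i+1) / Real.Gamma (β*i+1-α) := by
      intro i hi
      have hi1 : (1:ℝ) ≤ i := by exact_mod_cast (Finset.mem_Icc.mp hi).1
      have h1 : (0:ℝ) < β*i+1 := by nlinarith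
      have h2 : (0:ℝ) < β*i+1-α := by nlinarith
      exact div_pos (Real.Gamma_pos_of_pos h1) (Real.Gamma_pos_of_pos h2)
    have hP : (0:ℝ) < ∏ i ∈ Finset.Icc 1 n, Real.Gamma (β*i+1) / Real.Gamma (β*i+1-α) :=
      Finset.prod_pos hterm
    have hQ : (0:ℝ) < Real.Gamma (β*n+1-α+ν) := by
      apply Real.Gamma_pos_of_pos
      have : (0:ℝ) ≤ β*n := by positivity
      linarith
    have hR : (0:ℝ) < Real.Gamma (1-α+ν) := Real.Gamma_pos_of_pos hc
    unfold genFact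
    rw [Real.log_mul (ne_of_gt hP) (ne_of_gt (div_pos hQ hR)),
      Real.log_div (ne_of_gt hQ) (ne_of_gt hR),
      Real.log_prod (fun i hi => ne_of_gt (hterm i hi))]
    have : ∀ i ∈ Finset.Icc 1 n, Real.log (Real.Gamma (β*i+1) / Real.Gamma (β*i+1-α))
        = Real.log (Real.Gamma (β*i+1)) - Real.log (Real.Gamma (β*i+1-α)) := by
      intro i hi
      have hi1 : (1:ℝ) ≤ i := by exact_mod_cast (Finset.mem_Icc.mp hi).1
      have h1 : (0:ℝ) < β*i+1 := by nlinarith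
      have h2 : (0:ℝ) < β*i+1-α := by nlinarith
      exact Real.log_div (ne_of_gt (Real.Gamma_pos_of_pos h1)) (ne_of_gt (Real.Gamma_pos_of_pos h2))
    rw [Finset.sum_congr rfl this]
    ring
  have hS := sum_asymp α β hα0 hα1 hβ0 hβ1
  have hT : Filter.Tendsto (fun n : ℕ => Real.log (Real.Gamma (β*n+1-α+ν)) / ((n:ℝ) * Real.log n))
      Filter.atTop (nhds β) := by
    have := tail_asymp β (1-α+ν) hβ0
    apply this.congr
    intro n
    rw [show β*(n:ℝ) + (1-α+ν) = β*(n:ℝ)+1-α+ν by ring]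
  have hC : Filter.Tendsto (fun n : ℕ => Real.log (Real.Gamma (1-α+ν)) / ((n:ℝ) * Real.log n))
      Filter.atTop (nhds 0) := tendsto_const_nhds.div_atTop nlogn_atTop
  have key := (hS.add hT).sub hC
  rw [sub_zero] at key
  apply key.congr
  intro n
  rw [hdecomp n, sub_div, add_div]
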